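/- For a positive integer k, the rational number 6k + 21 − 9(6k + 5)/(2k+1)² is an integer if and only if k = 1. -/

import Mathlib

theorem stmt_14 (k : ℕ) (hk : 1 ≤ k) :
    (∃ m : ℤ, (6 * k + 21 - 9 * (6 * k + 5) / (2 * k + 1)^2 : ℚ) = m) ↔ k = 1 := by
  constructor
  · rintro ⟨m, h⟩
    have hne : ((2 * k + 1 : ℚ))^2 ≠ 0 := by positivity
    field_simp at h
    -- h should be an equation in ℚ over casts
    have he : ((6 * k + 21) * (2 * k + 1)^2 - 9 * (6 * k + 5) : ℤ) = m * (2 * k + 1)^2 := by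
      have h' : (((6 * k + 21) * (2 * k + 1)^2 - 9 * (6 * k + 5) : ℤ) : ℚ) = ((m * (2 * k + 1)^2 : ℤ) : ℚ) := by
        push_cast; linarith [h]
      exact_mod_cast h'
    have hdvd : ((2 * k + 1 : ℤ))^2 ∣ 9 * (6 * k + 5) := by
      refine ⟨(6 * k + 21) - m, ?_⟩
      ring_nf
      ring_nf at he
      linarith
    have hdvd1 : ((2 * k + 1 : ℤ)) ∣ 18 := by
      have h1 : ((2 * k + 1 : ℤ)) ∣ 9 * (6 * k + 5) :=
        dvd_trans (dvd_pow_self _ two_ne_zero) hdvd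
      have heq : (9 * (6 * k + 5) : ℤ) = 27 * (2 * k + 1) + 18 := by ring
      rw [heq] at h1
      exact (dvd_add_right ⟨27, by ring⟩).mp h1
    have hdn : (2 * k + 1) ∣ 18 := by exact_mod_cast hdvd1
    have hle : 2 * k + 1 ≤ 18 := Nat.le_of_dvd (by norm_num) hdn
    have hk8 : k ≤ 8 := by omega
    interval_cases k <;> simp_all <;> omega
  · rintro rfl
    exact ⟨16, by norm_num⟩
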